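/- arXiv:2312.13525 — 2 statements merged into one kernel-verified Lean document; each statement's English description precedes it below -/
import Mathlib

section
/- For every z ∈ M and positive integer k, the two formal sine functions coincide: S^T_{z,k}(x) = S^R_{z,k}(x) in the power series ring 𝔥_{M,∗}⟦x⟧. Equivalently, Σ_{n≥0} s_{z^n,k} s_{z^{n−1},k} ⋯ s_{z,k} x^{nk} = exp_∗( Σ_{n≥1} (s_{z^n,nk}/n) x^{nk} ). -/
open scoped BigOperators

/-- `𝔥_M`: the noncommutative polynomial ring `ℚ⟨e_z : z ∈ M⟩`, realized as the
monoid algebra of the free monoid on `M` over `ℚ` (concatenation product). -/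
abbrev H (M : Type*) [MonoidWithZero M] : Type _ := MonoidAlgebra ℚ (FreeMonoid M)

variable {M : Type*} [MonoidWithZero M]

/-- The word `e_{a_1} ⋯ e_{a_k}` as an element of `𝔥_M`. -/
noncomputable def wrd (l : List M) : H M := MonoidAlgebra.single (FreeMonoid.ofList l) 1

/-- The generator `e_z`. -/
noncomputable def e (z : M) : H M := wrd [z]

/-- The harmonic product on words, defined by the recursion
`e_a w ∗ e_b w' = e_{ab}(w ∗ e_b w' + e_a w ∗ w' − e_0 (w ∗ w'))`. -/
noncomputable def har : List M → List M → H M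
  | [], w => wrd w
  | a :: w, [] => wrd (a :: w)
  | a :: w, b :: w' =>
      wrd [a * b] * (har w (b :: w') + har (a :: w) w' - wrd [0] * har w w')
termination_by w w' => w.length + w'.length
decreasing_by all_goals (simp; try omega)

/-- The harmonic product `∗` on `𝔥_M`, extended ℚ-bilinearly from words. -/
noncomputable def hmul (f g : H M) : H M :=
  Finsupp.sum f.coeff fun w a => Finsupp.sum g.coeff fun w' b =>
    (a * b) • har (FreeMonoid.toList w) (FreeMonoid.toList w')

/-- Powers with respect to the harmonic product. -/
noncomputable def hpow (a : H M) : ℕ → H M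
  | 0 => 1
  | n + 1 => hmul a (hpow a n)

/-- `s_{z,k} = e_z e_0^{k-1}` (concatenation product). -/
noncomputable def s (z : M) (k : ℕ) : H M := e z * (e 0) ^ (k - 1)

/-- `sprod z k n = s_{z^n,k} s_{z^{n-1},k} ⋯ s_{z,k}` (concatenation), `sprod z k 0 = 1`. -/
noncomputable def sprod (z : M) (k : ℕ) : ℕ → H M
  | 0 => 1
  | n + 1 => s (z ^ (n + 1)) k * sprod z k n

/-- Cauchy product of power series over `(𝔥_M, ∗)`, represented as coefficient sequences. -/
noncomputable def hmulPS (f g : ℕ → H M) : ℕ → H M :=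
  fun n => ∑ i ∈ Finset.range (n + 1), hmul (f i) (g (n - i))

/-- Powers of a power series w.r.t. the harmonic product. -/
noncomputable def psPow (f : ℕ → H M) : ℕ → (ℕ → H M)
  | 0 => fun n => if n = 0 then 1 else 0
  | m + 1 => hmulPS f (psPow f m)

/-- `exp_∗` of a power series with zero constant term (coefficientwise). -/
noncomputable def expPS (f : ℕ → H M) : ℕ → H M :=
  fun n => ∑ m ∈ Finset.range (n + 1), ((Nat.factorial m : ℚ))⁻¹ • psPow f m n

/-- Coefficients of the formal sine `S_z(x) = Σ_{n≥0} s_{z^n,2}⋯s_{z,2} x^{2n+1}`. -/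
noncomputable def Scoef (z : M) (d : ℕ) : H M :=
  if d % 2 = 1 then sprod z 2 (d / 2) else 0

/-- Coefficients of the formal cosine `C_z(x) = S_z'(x)`. -/
noncomputable def Ccoef (z : M) (d : ℕ) : H M := ((d : ℚ) + 1) • Scoef z (d + 1)

/-- `w_{z,n} = (2n+1)! s_{z^n,2} ⋯ s_{z,2}`. -/
noncomputable def wz (z : M) (n : ℕ) : H M := ((Nat.factorial (2 * n + 1) : ℚ)) • sprod z 2 n

/-- `g_{z,m,n} = w_{z,m+n} − w_{z,m} ∗ w_{z,n}`. -/
noncomputable def gz (z : M) (m n : ℕ) : H M := wz z (m + n) - hmul (wz z m) (wz z n)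

/-- Coefficient of `x^i y^j` in `A_z(x,y) = S_z(x+y) − S_z(x) ∗ C_z(y) − C_z(x) ∗ S_z(y)`. -/
noncomputable def Acoef (z : M) (i j : ℕ) : H M :=
  (Nat.choose (i + j) i : ℚ) • Scoef z (i + j)
    - hmul (Scoef z i) (Ccoef z j) - hmul (Ccoef z i) (Scoef z j)

/-- Coefficient of `x^d` in `P_z(x) = −w_{z,1} ∗ S_z(x)^{∗2} + C_z(x)^{∗2}`. -/
noncomputable def Pcoef (z : M) (d : ℕ) : H M :=
  -(hmul (wz z 1) (hmulPS (Scoef z) (Scoef z) d)) + hmulPS (Ccoef z) (Ccoef z) d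


/-- Coefficients of `S^T_{z,k}(x) = Σ_{n≥0} s_{z^n,k}⋯s_{z,k} x^{(n+1)k−1}`. -/
noncomputable def STcoef (z : M) (k : ℕ) (d : ℕ) : H M :=
  if k ∣ (d + 1) then sprod z k ((d + 1) / k - 1) else 0

/-- Coefficients of the series `Σ_{n≥1} (s_{z^n,nk}/n) x^{nk}`. -/
noncomputable def gexp (z : M) (k : ℕ) (d : ℕ) : H M :=
  if d ≠ 0 ∧ k ∣ d then (((d / k : ℕ) : ℚ))⁻¹ • s (z ^ (d / k)) d else 0

/-- Coefficients of `S^R_{z,k}(x) = x^{k−1} exp_∗(Σ_{n≥1} (s_{z^n,nk}/n) x^{nk})`. -/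
noncomputable def SRcoef (z : M) (k : ℕ) (d : ℕ) : H M :=
  if k - 1 ≤ d then expPS (gexp z k) (d - (k - 1)) else 0

/-- Admissible words spanning `𝔥^0_M = ℚ ⊕ ⨁_{a≠0,1} 𝔥_M e_a ⊕ ⨁_{a≠0,b≠1} e_a 𝔥_M e_b`. -/
def adm0 (l : List M) : Prop :=
  l = [] ∨ ∃ h : l ≠ [],
    (l.getLast h ≠ 0 ∧ l.getLast h ≠ 1) ∨ (l.head h ≠ 0 ∧ l.getLast h ≠ 1)

/-- The subspace `𝔥^0_M`. -/
noncomputable def H0 (M : Type*) [MonoidWithZero M] : Submodule ℚ (H M) :=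
  Submodule.span ℚ {x | ∃ l : List M, adm0 l ∧ x = wrd l}

/-- Words spanning `𝔥^1_M = ⨁_{m≥0} 𝔥^0_M e_1^m`. -/
def adm1 (l : List M) : Prop :=
  ∃ (l₀ : List M) (m : ℕ), adm0 l₀ ∧ l = l₀ ++ List.replicate m 1

/-- The subspace `𝔥^1_M`. -/
noncomputable def H1 (M : Type*) [MonoidWithZero M] : Submodule ℚ (H M) :=
  Submodule.span ℚ {x | ∃ l : List M, adm1 l ∧ x = wrd l}

/-- `ℓ(w)`: the number of letters `e_a` of a word with `a ≠ 0`. -/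
noncomputable def lcount (l : List M) : ℕ :=
  l.countP fun a => @decide (a ≠ 0) (Classical.propDecidable _)

/-- `ℱ_d 𝔥^0_M`: span of admissible words `w` with `ℓ(w) ≤ d`. -/
noncomputable def F0 (M : Type*) [MonoidWithZero M] (d : ℕ) : Submodule ℚ (H M) :=
  Submodule.span ℚ {x | ∃ l : List M, adm0 l ∧ lcount l ≤ d ∧ x = wrd l}

/-- The ideal of `(𝔥_M, ∗)` generated by a set. -/
noncomputable def genIdeal (S : Set (H M)) : Submodule ℚ (H M) :=
  Submodule.span ℚ {x | ∃ a y, y ∈ S ∧ x = hmul a y}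

/-- The product on the polynomial ring `𝔥_{M,∗}[S,T]` (represented as
finitely supported coefficient families indexed by monomials `S^i T^j`). -/
noncomputable def polyMul2 (f g : (ℕ × ℕ) →₀ H M) : (ℕ × ℕ) →₀ H M :=
  Finsupp.sum f fun p a => Finsupp.sum g fun q b => Finsupp.single (p + q) (hmul a b)

/-- `φ : 𝔥^0_{M,∗}[S,T] → 𝔥_{M,∗}`, `Σ w_{ij} S^i T^j ↦ Σ w_{ij} ∗ e_0^{∗i} ∗ e_1^{∗j}`. -/
noncomputable def phi2 (f : (ℕ × ℕ) →₀ H M) : H M :=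
  Finsupp.sum f fun p a => hmul a (hmul (hpow (e 0) p.1) (hpow (e 1) p.2))

/-- The product on `𝔥_{M,∗}[S]`. -/
noncomputable def polyMul1 (f g : ℕ →₀ H M) : ℕ →₀ H M :=
  Finsupp.sum f fun p a => Finsupp.sum g fun q b => Finsupp.single (p + q) (hmul a b)

/-- `φ₁ : 𝔥^1_{M,∗}[S] → 𝔥_{M,∗}`, `Σ w_i S^i ↦ Σ w_i ∗ e_0^{∗i}`. -/
noncomputable def phi1 (f : ℕ →₀ H M) : H M :=
  Finsupp.sum f fun i a => hmul a (hpow (e 0) i)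

section Basic
variable {M : Type*} [MonoidWithZero M]

lemma wrd_mul (l1 l2 : List M) : wrd l1 * wrd l2 = wrd (l1 ++ l2) := by
  simp [wrd, MonoidAlgebra.single_mul_single]

lemma wrd_nil : (wrd ([] : List M)) = 1 := rfl

lemma har_nil_left (v : List M) : har ([] : List M) v = wrd v := by
  rw [har]

lemma har_nil_right (u : List M) : har u ([] : List M) = wrd u := by
  cases u with
  | nil => rw [har]
  | cons a w => rw [har]

lemma har_cons_cons (a b : M) (u v : List M) :
    har (a :: u) (b :: v) =
      wrd [a * b] * (har u (b :: v) + har (a :: u) v - wrd [0] * har u v) := by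
  rw [har]

lemma har_zero_left (u v : List M) : har (0 :: u) v = wrd [0] * har u v := by
  induction v with
  | nil =>
      rw [har_nil_right, har_nil_right, wrd_mul]; rfl
  | cons b v ih =>
      rw [har_cons_cons, zero_mul, ih, add_sub_cancel_right]

lemma har_zero_right (u v : List M) : har u (0 :: v) = wrd [0] * har u v := by
  induction u with
  | nil =>
      rw [har_nil_left, har_nil_left, wrd_mul]; rfl
  | cons a w ih =>
      rw [har_cons_cons, mul_zero, ih, add_sub_cancel_left]

end Basic
section Bilinear
variable {M : Type*} [MonoidWithZero M]

lemma hmul_wrd_wrd (u v : List M) : hmul (wrd u) (wrd v) = har u v := by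
  unfold hmul wrd
  rw [MonoidAlgebra.coeff_single, MonoidAlgebra.coeff_single, Finsupp.sum_single_index, Finsupp.sum_single_index]
  · simp [FreeMonoid.toList_ofList]
  · simp
  · rw [Finsupp.sum_single_index] <;> simp

lemma hmul_zero_left (x : H M) : hmul 0 x = 0 := by
  unfold hmul; simp

lemma hmul_zero_right (x : H M) : hmul x 0 = 0 := by
  unfold hmul; simp

lemma hmul_add_left (x y z : H M) : hmul (x + y) z = hmul x z + hmul y z := by
  unfold hmul
  rw [MonoidAlgebra.coeff_add, Finsupp.sum_add_index']
  · intro w; simp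
  · intro w a b; rw [← Finsupp.sum_add]; congr 1; ext w' c; rw [add_mul, add_smul]

lemma hmul_add_right (x y z : H M) : hmul x (y + z) = hmul x y + hmul x z := by
  unfold hmul
  simp only [MonoidAlgebra.coeff_add]
  rw [← Finsupp.sum_add]
  congr 1; ext w a
  rw [Finsupp.sum_add_index']
  · intro w'; simp
  · intro w' b c; rw [mul_add, add_smul]

lemma hmul_smul_left (c : ℚ) (x y : H M) : hmul (c • x) y = c • hmul x y := by
  unfold hmul
  rw [MonoidAlgebra.coeff_smul, Finsupp.sum_smul_index, Finsupp.smul_sum]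
  · apply Finsupp.sum_congr
    intro w _
    rw [Finsupp.smul_sum]
    apply Finsupp.sum_congr
    intro w' _
    rw [smul_smul, mul_assoc]
  · intro w; simp

lemma hmul_smul_right (c : ℚ) (x y : H M) : hmul x (c • y) = c • hmul x y := by
  unfold hmul
  simp only [MonoidAlgebra.coeff_smul]
  rw [Finsupp.smul_sum]
  apply Finsupp.sum_congr
  intro w _
  rw [Finsupp.sum_smul_index, Finsupp.smul_sum]
  · apply Finsupp.sum_congr
    intro w' _
    rw [smul_smul]
    congr 1; ring
  · intro w'; simp

lemma hmul_sub_left (x y z : H M) : hmul (x - y) z = hmul x z - hmul y z := by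
  rw [sub_eq_add_neg, ← neg_one_smul ℚ y, hmul_add_left, hmul_smul_left,
    neg_one_smul, ← sub_eq_add_neg]

lemma hmul_sub_right (x y z : H M) : hmul x (y - z) = hmul x y - hmul x z := by
  rw [sub_eq_add_neg, ← neg_one_smul ℚ z, hmul_add_right, hmul_smul_right,
    neg_one_smul, ← sub_eq_add_neg]

lemma hmul_sum_right {α : Type*} (x : H M) (t : Finset α) (f : α → H M) :
    hmul x (∑ i ∈ t, f i) = ∑ i ∈ t, hmul x (f i) := by
  classical
  induction t using Finset.induction_on with
  | empty => simp [hmul_zero_right]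
  | insert _ _ h ih => rw [Finset.sum_insert h, Finset.sum_insert h, hmul_add_right, ih]

lemma hmul_sum_left {α : Type*} (x : H M) (t : Finset α) (f : α → H M) :
    hmul (∑ i ∈ t, f i) x = ∑ i ∈ t, hmul (f i) x := by
  classical
  induction t using Finset.induction_on with
  | empty => simp [hmul_zero_left]
  | insert _ _ h ih => rw [Finset.sum_insert h, Finset.sum_insert h, hmul_add_left, ih]

lemma single_eq_smul_wrd (w : FreeMonoid M) (c : ℚ) :
    (MonoidAlgebra.single w c : H M) = c • wrd (FreeMonoid.toList w) := by
  simp [wrd, FreeMonoid.ofList_toList]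

lemma hmul_one_right (x : H M) : hmul x 1 = x := by
  have h1 : (1 : H M) = wrd [] := rfl
  rw [h1]
  induction x using MonoidAlgebra.induction_linear with
  | zero => rw [hmul_zero_left]
  | add f g hf hg => rw [hmul_add_left, hf, hg]
  | single w c =>
      rw [single_eq_smul_wrd, hmul_smul_left, hmul_wrd_wrd, har_nil_right]

lemma hmul_one_left (x : H M) : hmul 1 x = x := by
  have h1 : (1 : H M) = wrd [] := rfl
  rw [h1]
  induction x using MonoidAlgebra.induction_linear with
  | zero => rw [hmul_zero_right]
  | add f g hf hg => rw [hmul_add_right, hf, hg]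
  | single w c =>
      rw [single_eq_smul_wrd, hmul_smul_right, hmul_wrd_wrd, har_nil_left]

end Bilinear
section Assoc
variable {M : Type*} [MonoidWithZero M]

lemma wrd_cons (a : M) (l : List M) : wrd (a :: l) = wrd [a] * wrd l := by
  rw [wrd_mul]; rfl

lemma hmul_wrd_zerocons_right (x : H M) (v : List M) :
    hmul x (wrd (0 :: v)) = wrd [0] * hmul x (wrd v) := by
  induction x using MonoidAlgebra.induction_linear with
  | zero => rw [hmul_zero_left, hmul_zero_left, mul_zero]
  | add f g hf hg => rw [hmul_add_left, hmul_add_left, hf, hg, mul_add]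
  | single w c =>
      rw [single_eq_smul_wrd, hmul_smul_left, hmul_smul_left, hmul_wrd_wrd,
        hmul_wrd_wrd, har_zero_right, mul_smul_comm]

lemma hmul_wrd_zerocons_left (x : H M) (v : List M) :
    hmul (wrd (0 :: v)) x = wrd [0] * hmul (wrd v) x := by
  induction x using MonoidAlgebra.induction_linear with
  | zero => rw [hmul_zero_right, hmul_zero_right, mul_zero]
  | add f g hf hg => rw [hmul_add_right, hmul_add_right, hf, hg, mul_add]
  | single w c =>
      rw [single_eq_smul_wrd, hmul_smul_right, hmul_smul_right, hmul_wrd_wrd,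
        hmul_wrd_wrd, har_zero_left, mul_smul_comm]

lemma hmul_zeroword_right (x y : H M) :
    hmul x (wrd [0] * y) = wrd [0] * hmul x y := by
  induction y using MonoidAlgebra.induction_linear with
  | zero => rw [mul_zero, hmul_zero_right, mul_zero]
  | add f g hf hg => rw [mul_add, hmul_add_right, hf, hg, hmul_add_right, mul_add]
  | single w c =>
      rw [single_eq_smul_wrd, mul_smul_comm, ← wrd_cons, hmul_smul_right,
        hmul_wrd_zerocons_right, hmul_smul_right, mul_smul_comm]

lemma hmul_zeroword_left (x y : H M) :
    hmul (wrd [0] * y) x = wrd [0] * hmul y x := by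
  induction y using MonoidAlgebra.induction_linear with
  | zero => simp [hmul_zero_left]
  | add f g hf hg => rw [mul_add, hmul_add_left, hf, hg, hmul_add_left, mul_add]
  | single w c =>
      rw [single_eq_smul_wrd, mul_smul_comm, ← wrd_cons, hmul_smul_left,
        hmul_wrd_zerocons_left, hmul_smul_left, mul_smul_comm]

lemma hmul_cons_cons (a b : M) (u v : List M) :
    hmul (wrd (a :: u)) (wrd (b :: v)) =
      wrd [a * b] * (hmul (wrd u) (wrd (b :: v)) + hmul (wrd (a :: u)) (wrd v)
        - wrd [0] * hmul (wrd u) (wrd v)) := by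
  rw [hmul_wrd_wrd, hmul_wrd_wrd, hmul_wrd_wrd, hmul_wrd_wrd, har_cons_cons]

/-- bilinear extension of the recursion, second argument arbitrary -/
lemma hmul_cons_left (a b : M) (u : List M) (Y : H M) :
    hmul (wrd (a :: u)) (wrd [b] * Y) =
      wrd [a * b] * (hmul (wrd u) (wrd [b] * Y) + hmul (wrd (a :: u)) Y
        - wrd [0] * hmul (wrd u) Y) := by
  induction Y using MonoidAlgebra.induction_linear with
  | zero => simp [hmul_zero_right]
  | add f g hf hg =>
      rw [mul_add, hmul_add_right, hf, hg, hmul_add_right, hmul_add_right, hmul_add_right]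
      noncomm_ring
  | single w c =>
      rw [single_eq_smul_wrd, mul_smul_comm, ← wrd_cons, hmul_smul_right, hmul_cons_cons,
        hmul_smul_right, hmul_smul_right, ← smul_add, hmul_smul_right, mul_smul_comm,
        ← smul_sub, mul_smul_comm]

/-- bilinear extension of the recursion, first argument arbitrary -/
lemma hmul_cons_right (a b : M) (v : List M) (Y : H M) :
    hmul (wrd [a] * Y) (wrd (b :: v)) =
      wrd [a * b] * (hmul Y (wrd (b :: v)) + hmul (wrd [a] * Y) (wrd v)
        - wrd [0] * hmul Y (wrd v)) := by
  induction Y using MonoidAlgebra.induction_linear with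
  | zero => simp [hmul_zero_left]
  | add f g hf hg =>
      rw [mul_add, hmul_add_left, hf, hg, hmul_add_left, hmul_add_left, hmul_add_left]
      noncomm_ring
  | single w c =>
      rw [single_eq_smul_wrd, mul_smul_comm, ← wrd_cons, hmul_smul_left, hmul_cons_cons,
        hmul_smul_left, hmul_smul_left, ← smul_add, hmul_smul_left, mul_smul_comm,
        ← smul_sub, mul_smul_comm]

end Assoc
section AssocMain
variable {M : Type*} [MonoidWithZero M]

lemma hmul_wrd_assoc : ∀ (u v w : List M),
    hmul (hmul (wrd u) (wrd v)) (wrd w) = hmul (wrd u) (hmul (wrd v) (wrd w)) := by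
  suffices Hn : ∀ n (u v w : List M), u.length + v.length + w.length ≤ n →
      hmul (hmul (wrd u) (wrd v)) (wrd w) = hmul (wrd u) (hmul (wrd v) (wrd w)) by
    exact fun u v w => Hn (u.length + v.length + w.length) u v w le_rfl
  intro n
  induction n with
  | zero =>
      intro u v w hlen
      have hu : u = [] := List.eq_nil_of_length_eq_zero (by omega)
      subst hu
      rw [wrd_nil, hmul_one_left, hmul_one_left]
  | succ n ih =>
      intro u v w hlen
      cases u with
      | nil => rw [wrd_nil, hmul_one_left, hmul_one_left]
      | cons a u =>
        cases v with
        | nil => rw [wrd_nil, hmul_one_right, hmul_one_left]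
        | cons b v =>
          cases w with
          | nil => rw [wrd_nil, hmul_one_right, hmul_one_right]
          | cons c w =>
            rw [hmul_cons_cons a b u v, hmul_cons_right, ← hmul_cons_cons a b u v,
              hmul_sub_left, hmul_add_left, hmul_zeroword_left,
              hmul_sub_left, hmul_add_left, hmul_zeroword_left]
            rw [hmul_cons_cons b c v w, hmul_cons_left, ← hmul_cons_cons b c v w,
              hmul_sub_right, hmul_add_right, hmul_zeroword_right,
              hmul_sub_right, hmul_add_right, hmul_zeroword_right]
            rw [ih u (b :: v) (c :: w) (by simp only [List.length_cons] at hlen ⊢; omega),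
              ih (a :: u) v (c :: w) (by simp only [List.length_cons] at hlen ⊢; omega),
              ih u v (c :: w) (by simp only [List.length_cons] at hlen ⊢; omega),
              ih (a :: u) (b :: v) w (by simp only [List.length_cons] at hlen ⊢; omega),
              ih u (b :: v) w (by simp only [List.length_cons] at hlen ⊢; omega),
              ih (a :: u) v w (by simp only [List.length_cons] at hlen ⊢; omega),
              ih u v w (by simp only [List.length_cons] at hlen ⊢; omega),
              mul_assoc a b c]
            noncomm_ring

lemma hmul_assoc (x y z : H M) : hmul (hmul x y) z = hmul x (hmul y z) := by
  induction x using MonoidAlgebra.induction_linear with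
  | zero => rw [hmul_zero_left, hmul_zero_left, hmul_zero_left]
  | add f g hf hg => rw [hmul_add_left, hmul_add_left, hmul_add_left, hf, hg]
  | single wx c =>
      rw [single_eq_smul_wrd, hmul_smul_left, hmul_smul_left, hmul_smul_left]
      congr 1
      induction y using MonoidAlgebra.induction_linear with
      | zero => rw [hmul_zero_right, hmul_zero_left, hmul_zero_right]
      | add f g hf hg =>
          rw [hmul_add_right, hmul_add_left, hf, hg, hmul_add_left, hmul_add_right]
      | single wy c' =>
          rw [single_eq_smul_wrd, hmul_smul_right, hmul_smul_left, hmul_smul_left,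
            hmul_smul_right]
          congr 1
          induction z using MonoidAlgebra.induction_linear with
          | zero => rw [hmul_zero_right, hmul_zero_right, hmul_zero_right]
          | add f g hf hg =>
              rw [hmul_add_right, hmul_add_right, hf, hg, hmul_add_right]
          | single wz c'' =>
              rw [single_eq_smul_wrd, hmul_smul_right, hmul_smul_right, hmul_smul_right]
              congr 1
              exact hmul_wrd_assoc _ _ _

lemma har_comm : ∀ (u v : List M), (∀ x ∈ u, ∀ y ∈ v, x * y = y * x) →
    har u v = har v u := by
  suffices Hn : ∀ n (u v : List M), u.length + v.length ≤ n →
      (∀ x ∈ u, ∀ y ∈ v, x * y = y * x) → har u v = har v u by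
    exact fun u v => Hn (u.length + v.length) u v le_rfl
  intro n
  induction n with
  | zero =>
      intro u v hlen hc
      have hu : u = [] := List.eq_nil_of_length_eq_zero (by omega)
      subst hu
      rw [har_nil_left, har_nil_right]
  | succ n ih =>
      intro u v hlen hc
      cases u with
      | nil => rw [har_nil_left, har_nil_right]
      | cons a u =>
        cases v with
        | nil => rw [har_nil_left, har_nil_right]
        | cons b v =>
          rw [har_cons_cons, har_cons_cons,
            hc a List.mem_cons_self b List.mem_cons_self,
            ih u (b :: v) (by simp only [List.length_cons] at hlen ⊢; omega)
              (fun x hx y hy => hc x (List.mem_cons_of_mem _ hx) y hy),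
            ih (a :: u) v (by simp only [List.length_cons] at hlen ⊢; omega)
              (fun x hx y hy => hc x hx y (List.mem_cons_of_mem _ hy)),
            ih u v (by simp only [List.length_cons] at hlen ⊢; omega)
              (fun x hx y hy => hc x (List.mem_cons_of_mem _ hx) y
                (List.mem_cons_of_mem _ hy))]
          noncomm_ring

end AssocMain
section LemmaA
variable {M : Type*} [MonoidWithZero M]

lemma e_zero_pow (m : ℕ) : (e (0 : M)) ^ m = wrd (List.replicate m 0) := by
  induction m with
  | zero => rw [pow_zero, List.replicate_zero, wrd_nil]
  | succ m ih => rw [pow_succ', ih, e, wrd_mul]; rfl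

lemma s_eq_wrd (x : M) (d : ℕ) : s x d = wrd (x :: List.replicate (d - 1) 0) := by
  rw [s, e_zero_pow, e, wrd_mul]; rfl

/-- the word of `sprod z k n` -/
def Wlist (z : M) (k : ℕ) : ℕ → List M
  | 0 => []
  | n + 1 => z ^ (n + 1) :: (List.replicate (k - 1) 0 ++ Wlist z k n)

lemma sprod_eq_wrd (z : M) (k : ℕ) (n : ℕ) : sprod z k n = wrd (Wlist z k n) := by
  induction n with
  | zero => rfl
  | succ n ih =>
      show s (z ^ (n + 1)) k * sprod z k n = _
      rw [ih, s_eq_wrd, wrd_mul, Wlist]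
      rfl

lemma har_rep_zero_left (p : ℕ) (u v : List M) :
    har (List.replicate p 0 ++ u) v = wrd (List.replicate p 0) * har u v := by
  induction p with
  | zero => rw [List.replicate_zero, List.nil_append, wrd_nil, one_mul]
  | succ p ih =>
      rw [List.replicate_succ, List.cons_append, har_zero_left, ih, wrd_cons 0 (List.replicate p 0), mul_assoc]

lemma har_rep_zero_right (p : ℕ) (u v : List M) :
    har u (List.replicate p 0 ++ v) = wrd (List.replicate p 0) * har u v := by
  induction p with
  | zero => rw [List.replicate_zero, List.nil_append, wrd_nil, one_mul]
  | succ p ih =>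
      rw [List.replicate_succ, List.cons_append, har_zero_right, ih, wrd_cons 0 (List.replicate p 0), mul_assoc]

lemma har_rep_left_wrd (p : ℕ) (v : List M) :
    har (List.replicate p 0) v = wrd (List.replicate p 0 ++ v) := by
  have h := har_rep_zero_left (M := M) p [] v
  rw [List.append_nil] at h
  rw [h, har_nil_left, wrd_mul]

/-- the key single-step recursion -/
lemma har_step (z : M) (k : ℕ) (hk : 1 ≤ k) (x : M) (p : ℕ) (n : ℕ) :
    har (x :: List.replicate p 0) (Wlist z k (n + 1)) =
      wrd ((x * z ^ (n + 1)) :: (List.replicate p 0 ++ Wlist z k (n + 1)))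
      - wrd ((x * z ^ (n + 1)) :: (List.replicate (p + k) 0 ++ Wlist z k n))
      + wrd [x * z ^ (n + 1)] * wrd (List.replicate (k - 1) 0)
          * har (x :: List.replicate p 0) (Wlist z k n) := by
  have hW : Wlist z k (n + 1) = z ^ (n + 1) :: (List.replicate (k - 1) 0 ++ Wlist z k n) := rfl
  rw [hW, har_cons_cons, ← hW]
  rw [har_rep_left_wrd, har_rep_zero_right, har_rep_left_wrd]
  have hrep : ((0 : M) :: (List.replicate p 0 ++ (List.replicate (k - 1) 0 ++ Wlist z k n)))
      = List.replicate (p + k) 0 ++ Wlist z k n := by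
    rw [show p + k = (1 + p) + (k - 1) by omega, List.replicate_add, List.replicate_add,
      List.append_assoc, List.append_assoc]
    rfl
  have e1 : wrd [x * z ^ (n + 1)] * wrd (List.replicate p 0 ++ Wlist z k (n + 1))
      = wrd ((x * z ^ (n + 1)) :: (List.replicate p 0 ++ Wlist z k (n + 1))) := by
    rw [wrd_mul]; rfl
  have e2 : wrd [x * z ^ (n + 1)] * (wrd [0] * wrd (List.replicate p 0 ++
        (List.replicate (k - 1) 0 ++ Wlist z k n)))
      = wrd ((x * z ^ (n + 1)) :: (List.replicate (p + k) 0 ++ Wlist z k n)) := by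
    rw [wrd_mul, wrd_mul]
    apply congrArg
    show (x * z ^ (n + 1)) :: ((0 : M) :: (List.replicate p 0 ++
        (List.replicate (k - 1) 0 ++ Wlist z k n))) = _
    rw [hrep]
  rw [mul_sub, mul_add, e1, e2, ← mul_assoc]
  abel

/-- Lemma A : the Newton-type recursion -/
lemma lemmaA (z : M) (k : ℕ) (hk : 1 ≤ k) (n : ℕ) :
    (n : ℚ) • sprod z k n
      = ∑ m ∈ Finset.range n, hmul (s (z ^ (m + 1)) ((m + 1) * k)) (sprod z k (n - 1 - m)) := by
  induction n with
  | zero => simp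
  | succ n ih =>
      have hterm : ∀ (m r : ℕ), hmul (s (z ^ (m + 1)) ((m + 1) * k)) (sprod z k r)
          = har (z ^ (m + 1) :: List.replicate ((m + 1) * k - 1) 0) (Wlist z k r) := by
        intro m r
        rw [s_eq_wrd, sprod_eq_wrd, hmul_wrd_wrd]
      simp only [Nat.add_sub_cancel]
      set C : ℕ → H M := fun j =>
        wrd (z ^ (n + 1) :: (List.replicate ((j + 1) * k - 1) 0 ++ Wlist z k (n - j))) with hC
      have hstep : ∀ m ∈ Finset.range n,
          hmul (s (z ^ (m + 1)) ((m + 1) * k)) (sprod z k (n - m))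
            = (C m - C (m + 1)) + wrd [z ^ (n + 1)] * wrd (List.replicate (k - 1) 0)
                * hmul (s (z ^ (m + 1)) ((m + 1) * k)) (sprod z k (n - 1 - m)) := by
        intro m hm
        rw [Finset.mem_range] at hm
        have hnm : n - m = (n - 1 - m) + 1 := by omega
        have h2 : n - (m + 1) = n - 1 - m := by omega
        have hz : z ^ (m + 1) * z ^ (n - 1 - m + 1) = z ^ (n + 1) := by
          rw [← pow_add]; congr 1; omega
        have h1 : (m + 1) * k - 1 + k = (m + 1 + 1) * k - 1 := by
          have hx : (m + 1 + 1) * k = (m + 1) * k + k := by ring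
          have hy : 0 < (m + 1) * k := Nat.mul_pos (Nat.succ_pos m) hk
          omega
        rw [hterm, hterm, hnm, har_step z k hk]
        simp only [hC, hnm, hz, h1, h2]
      rw [Finset.sum_range_succ, Finset.sum_congr rfl hstep, Finset.sum_add_distrib,
        Finset.sum_range_sub' C n, ← Finset.mul_sum, ← ih]
      have hTn : hmul (s (z ^ (n + 1)) ((n + 1) * k)) (sprod z k (n - n)) = C n := by
        rw [Nat.sub_self, show sprod z k 0 = 1 from rfl, hmul_one_right, s_eq_wrd]
        simp only [hC, Nat.sub_self]
        rw [show Wlist z k 0 = [] from rfl, List.append_nil]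
      have hC0 : C 0 = sprod z k (n + 1) := by
        simp only [hC, Nat.sub_zero]
        rw [show (0 + 1) * k - 1 = k - 1 by omega, sprod_eq_wrd]
        rfl
      have hQ : wrd [z ^ (n + 1)] * wrd (List.replicate (k - 1) 0) * sprod z k n
          = sprod z k (n + 1) := by
        rw [show sprod z k (n + 1) = s (z ^ (n + 1)) k * sprod z k n from rfl, s_eq_wrd,
          wrd_cons (z ^ (n + 1)) (List.replicate (k - 1) 0)]
      rw [hTn, hC0, mul_smul_comm, hQ]
      have hcast : ((n + 1 : ℕ) : ℚ) = (n : ℚ) + 1 := by push_cast; ring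
      rw [hcast, add_smul, one_smul]
      abel

end LemmaA
section PS
variable {M : Type*} [MonoidWithZero M]

lemma psPow_eq_zero_of_lt (g : ℕ → H M) (hg0 : g 0 = 0) :
    ∀ m n, n < m → psPow g m n = 0 := by
  intro m
  induction m with
  | zero => intro n hn; omega
  | succ m ih =>
      intro n hn
      show hmulPS g (psPow g m) n = 0
      unfold hmulPS
      apply Finset.sum_eq_zero
      intro i hi
      rw [Finset.mem_range] at hi
      rcases Nat.eq_zero_or_pos i with h | h
      · subst h; rw [hg0, hmul_zero_left]
      · rw [ih (n - i) (by omega), hmul_zero_right]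

lemma hmulPS_delta (f g : ℕ → H M) (n : ℕ) : hmulPS f (psPow g 0) n = f n := by
  unfold hmulPS
  rw [Finset.sum_eq_single n]
  · show hmul (f n) (if n - n = 0 then 1 else 0) = f n
    rw [Nat.sub_self, if_pos rfl, hmul_one_right]
  · intro i hi hne
    rw [Finset.mem_range] at hi
    show hmul (f i) (if n - i = 0 then 1 else 0) = 0
    rw [if_neg (by omega), hmul_zero_right]
  · intro h
    exact absurd (Finset.self_mem_range_succ n) h

lemma hmulPS_smul_right (c : ℚ) (f h : ℕ → H M) (n : ℕ) :
    hmulPS f (fun j => c • h j) n = c • hmulPS f h n := by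
  unfold hmulPS
  rw [Finset.smul_sum]
  exact Finset.sum_congr rfl fun i _ => hmul_smul_right c _ _

lemma hmulPS_congr (f h h' : ℕ → H M) (n : ℕ) (he : ∀ j, j ≤ n → h j = h' j) :
    hmulPS f h n = hmulPS f h' n := by
  unfold hmulPS
  exact Finset.sum_congr rfl fun i hi => by
    rw [he (n - i) (by omega)]

lemma hmulPS_swap (A B X : ℕ → H M)
    (h : ∀ i j, hmul (A i) (B j) = hmul (B j) (A i)) (n : ℕ) :
    hmulPS A (hmulPS B X) n = hmulPS B (hmulPS A X) n := by
  have e1 : ∀ (A B : ℕ → H M), hmulPS A (hmulPS B X) n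
      = ∑ i ∈ Finset.range (n + 1), ∑ j ∈ Finset.range (n - i + 1),
          hmul (hmul (A i) (B j)) (X (n - i - j)) := by
    intro A B
    unfold hmulPS
    refine Finset.sum_congr rfl fun i _ => ?_
    rw [hmul_sum_right]
    exact Finset.sum_congr rfl fun j _ => (hmul_assoc _ _ _).symm
  rw [e1 A B, e1 B A]
  calc ∑ i ∈ Finset.range (n + 1), ∑ j ∈ Finset.range (n - i + 1),
          hmul (hmul (A i) (B j)) (X (n - i - j))
      = ∑ i ∈ Finset.range (n + 1), ∑ j ∈ Finset.range (n - i + 1),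
          hmul (hmul (B j) (A i)) (X (n - j - i)) := by
        refine Finset.sum_congr rfl fun i _ => Finset.sum_congr rfl fun j _ => ?_
        rw [h i j, show n - i - j = n - j - i from by omega]
    _ = ∑ j ∈ Finset.range (n + 1), ∑ i ∈ Finset.range (n - j + 1),
          hmul (hmul (B j) (A i)) (X (n - j - i)) := by
        refine Finset.sum_comm' ?_
        intro x y
        simp only [Finset.mem_range]
        omega

lemma leibnizPS (f h : ℕ → H M) (n : ℕ) :
    (n : ℚ) • hmulPS f h n
      = hmulPS (fun i => (i : ℚ) • f i) h n + hmulPS f (fun i => (i : ℚ) • h i) n := by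
  unfold hmulPS
  rw [Finset.smul_sum, ← Finset.sum_add_distrib]
  refine Finset.sum_congr rfl fun i hi => ?_
  rw [Finset.mem_range] at hi
  rw [hmul_smul_left, hmul_smul_right, ← add_smul]
  congr 1
  have hin : i ≤ n := by omega
  have : ((n - i : ℕ) : ℚ) = (n : ℚ) - (i : ℚ) := by
    push_cast [hin]; ring
  rw [this]; ring

lemma psPow_deriv (g : ℕ → H M) (hc : ∀ i j, hmul (g i) (g j) = hmul (g j) (g i)) :
    ∀ (m : ℕ) (n : ℕ), (n : ℚ) • psPow g (m + 1) n
      = ((m : ℚ) + 1) • hmulPS (fun i => (i : ℚ) • g i) (psPow g m) n := by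
  intro m
  induction m with
  | zero =>
      intro n
      show (n : ℚ) • hmulPS g (psPow g 0) n = _
      rw [hmulPS_delta, hmulPS_delta]
      norm_num
  | succ m ih =>
      intro n
      show (n : ℚ) • hmulPS g (psPow g (m + 1)) n = _
      rw [leibnizPS]
      have h2 : hmulPS g (fun i => (i : ℚ) • psPow g (m + 1) i) n
          = ((m : ℚ) + 1) • hmulPS (fun i => (i : ℚ) • g i) (psPow g (m + 1)) n := by
        rw [hmulPS_congr g _ (fun i => ((m : ℚ) + 1) •
            hmulPS (fun j => (j : ℚ) • g j) (psPow g m) i) n (fun j _ => ih j),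
          hmulPS_smul_right]
        congr 1
        have hswap := hmulPS_swap g (fun j => (j : ℚ) • g j) (psPow g m) ?_ n
        · exact hswap
        · intro i j
          rw [hmul_smul_right, hmul_smul_left, hc i j]
      rw [h2]
      have hcast : (((m + 1 : ℕ)) : ℚ) + 1 = ((m : ℚ) + 1) + 1 := by push_cast; ring
      rw [hcast, add_smul ((m : ℚ) + 1) (1 : ℚ), one_smul]
      abel

lemma expPS_deriv (g : ℕ → H M) (hg0 : g 0 = 0)
    (hc : ∀ i j, hmul (g i) (g j) = hmul (g j) (g i)) (n : ℕ) :
    (n : ℚ) • expPS g n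
      = ∑ i ∈ Finset.range (n + 1), hmul ((i : ℚ) • g i) (expPS g (n - i)) := by
  unfold expPS
  rw [Finset.smul_sum]
  rw [Finset.sum_range_succ']
  have h0 : (n : ℚ) • ((Nat.factorial 0 : ℚ))⁻¹ • psPow g 0 n = 0 := by
    by_cases hn : n = 0
    · subst hn; rw [Nat.cast_zero, zero_smul]
    · have : psPow g 0 n = 0 := by simp [psPow, hn]
      rw [this, smul_zero, smul_zero]
  rw [h0, add_zero]
  have hterm : ∀ m, (n : ℚ) • ((Nat.factorial (m + 1) : ℚ))⁻¹ • psPow g (m + 1) n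
      = ((Nat.factorial m : ℚ))⁻¹ • hmulPS (fun i => (i : ℚ) • g i) (psPow g m) n := by
    intro m
    rw [smul_comm, psPow_deriv g hc m n, smul_smul]
    congr 1
    rw [Nat.factorial_succ]
    have hfm : (Nat.factorial m : ℚ) ≠ 0 := Nat.cast_ne_zero.mpr (Nat.factorial_ne_zero m)
    have hm1 : ((m : ℚ) + 1) ≠ 0 := by positivity
    push_cast
    field_simp
  rw [Finset.sum_congr rfl fun m _ => hterm m]
  have expand : ∀ m, ((Nat.factorial m : ℚ))⁻¹ • hmulPS (fun i => (i : ℚ) • g i) (psPow g m) n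
      = ∑ i ∈ Finset.range (n + 1),
          hmul ((i : ℚ) • g i) (((Nat.factorial m : ℚ))⁻¹ • psPow g m (n - i)) := by
    intro m
    unfold hmulPS
    rw [Finset.smul_sum]
    exact Finset.sum_congr rfl fun i _ => by rw [hmul_smul_right]
  rw [Finset.sum_congr rfl fun m _ => expand m, Finset.sum_comm]
  refine Finset.sum_congr rfl fun i hi => ?_
  rw [Finset.mem_range] at hi
  rcases Nat.eq_zero_or_pos i with h | h
  · subst h
    have h1 : ((0 : ℕ) : ℚ) • g 0 = 0 := by simp
    rw [h1, hmul_zero_left]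
    exact Finset.sum_eq_zero fun m _ => hmul_zero_left _
  · rw [hmul_sum_right]
    refine (Finset.sum_subset (Finset.range_subset_range.mpr (by omega)) ?_).symm
    intro m hm hnotm
    rw [Finset.mem_range] at hm
    rw [Finset.mem_range, not_lt] at hnotm
    rw [psPow_eq_zero_of_lt g hg0 m (n - i) (by omega), smul_zero, hmul_zero_right]

end PS
section Final
variable {M : Type*} [MonoidWithZero M]

lemma s_comm (z : M) (a b i j : ℕ) :
    hmul (s (z ^ a) i) (s (z ^ b) j) = hmul (s (z ^ b) j) (s (z ^ a) i) := by
  rw [s_eq_wrd, s_eq_wrd, hmul_wrd_wrd, hmul_wrd_wrd]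
  apply har_comm
  intro x hx y hy
  rcases List.mem_cons.mp hx with rfl | hx'
  · rcases List.mem_cons.mp hy with rfl | hy'
    · exact ((Commute.refl z).pow_pow a b).eq
    · rw [List.eq_of_mem_replicate hy', mul_zero, zero_mul]
  · rw [List.eq_of_mem_replicate hx', zero_mul, mul_zero]

lemma gexp_zero (z : M) (k : ℕ) : gexp z k 0 = 0 := by simp [gexp]

lemma gexp_comm (z : M) (k : ℕ) (i j : ℕ) :
    hmul (gexp z k i) (gexp z k j) = hmul (gexp z k j) (gexp z k i) := by
  unfold gexp
  by_cases hi : i ≠ 0 ∧ k ∣ i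
  · by_cases hj : j ≠ 0 ∧ k ∣ j
    · rw [if_pos hi, if_pos hj, hmul_smul_left, hmul_smul_right, hmul_smul_left,
        hmul_smul_right, s_comm z (i / k) (j / k) i j, smul_comm]
    · rw [if_neg hj, hmul_zero_left, hmul_zero_right]
  · rw [if_neg hi, hmul_zero_left, hmul_zero_right]

lemma Dg_eq (z : M) (k : ℕ) (hk : 1 ≤ k) (i : ℕ) :
    (i : ℚ) • gexp z k i
      = if i ≠ 0 ∧ k ∣ i then (k : ℚ) • s (z ^ (i / k)) i else 0 := by
  unfold gexp
  by_cases h : i ≠ 0 ∧ k ∣ i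
  · rw [if_pos h, if_pos h, smul_smul]
    congr 1
    obtain ⟨q, rfl⟩ := h.2
    have hq : q ≠ 0 := by rintro rfl; exact h.1 (by simp)
    rw [Nat.mul_div_cancel_left q (by omega)]
    have hqq : ((q : ℚ)) ≠ 0 := Nat.cast_ne_zero.mpr hq
    push_cast
    field_simp
  · rw [if_neg h, if_neg h, smul_zero]

lemma aseq_rec (z : M) (k : ℕ) (hk : 1 ≤ k) (n : ℕ) :
    (n : ℚ) • (if k ∣ n then sprod z k (n / k) else 0)
      = ∑ i ∈ Finset.range (n + 1),
          hmul ((i : ℚ) • gexp z k i)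
            ((if k ∣ (n - i) then sprod z k ((n - i) / k) else 0) : H M) := by
  by_cases hn : k ∣ n
  · obtain ⟨N, rfl⟩ := hn
    classical
    have hsub : ∀ i ∈ Finset.range (k * N + 1),
        hmul ((i : ℚ) • gexp z k i)
          ((if k ∣ (k * N - i) then sprod z k ((k * N - i) / k) else 0) : H M) ≠ 0
        → k ∣ i := by
      intro i _ hne
      by_contra hdvd
      have : gexp z k i = 0 := by
        unfold gexp; rw [if_neg (by tauto)]
      rw [this, smul_zero, hmul_zero_left] at hne
      exact hne rfl
    rw [← Finset.sum_filter_of_ne hsub]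
    have himg : (Finset.range (k * N + 1)).filter (fun i => k ∣ i)
        = (Finset.range (N + 1)).image (fun m => k * m) := by
      ext i
      simp only [Finset.mem_filter, Finset.mem_image, Finset.mem_range]
      constructor
      · rintro ⟨hi, q, rfl⟩
        exact ⟨q, by
          constructor
          · have := Nat.le_of_lt_succ hi
            exact Nat.lt_succ_of_le (Nat.le_of_mul_le_mul_left this (by omega))
          · rfl⟩
      · rintro ⟨m, hm, rfl⟩
        exact ⟨Nat.lt_succ_of_le (Nat.mul_le_mul_left k (Nat.le_of_lt_succ hm)),
          ⟨m, rfl⟩⟩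
    rw [himg, Finset.sum_image (by
      intro x _ y _ hxy
      exact Nat.eq_of_mul_eq_mul_left (by omega) hxy)]
    rw [Finset.sum_range_succ']
    have h00 : hmul (((k * 0 : ℕ) : ℚ) • gexp z k (k * 0))
        ((if k ∣ (k * N - k * 0) then sprod z k ((k * N - k * 0) / k) else 0) : H M) = 0 := by
      rw [show ((k * 0 : ℕ) : ℚ) = 0 by push_cast; ring, zero_smul, hmul_zero_left]
    rw [h00, add_zero]
    have hterm : ∀ m, m < N →
        hmul (((k * (m + 1) : ℕ) : ℚ) • gexp z k (k * (m + 1)))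
          ((if k ∣ (k * N - k * (m + 1)) then sprod z k ((k * N - k * (m + 1)) / k) else 0) : H M)
        = (k : ℚ) • hmul (s (z ^ (m + 1)) ((m + 1) * k)) (sprod z k (N - 1 - m)) := by
      intro m hm
      have hdom : k * (N - (m + 1)) + k * (m + 1) = k * N := by
        rw [← Nat.mul_add]
        congr 1
        omega
      have hsubm : k * N - k * (m + 1) = k * (N - (m + 1)) := by omega
      rw [Dg_eq z k hk, if_pos ⟨by positivity, ⟨m + 1, rfl⟩⟩,
        Nat.mul_div_cancel_left (m + 1) (by omega), hsubm,
        if_pos ⟨N - (m + 1), rfl⟩, Nat.mul_div_cancel_left _ (show 0 < k by omega),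
        hmul_smul_left]
      rw [show N - (m + 1) = N - 1 - m by omega, show k * (m + 1) = (m + 1) * k by ring]
    rw [Finset.sum_congr rfl fun m hm => hterm m (Finset.mem_range.mp hm)]
    rw [← Finset.smul_sum, ← lemmaA z k hk N]
    rw [if_pos ⟨N, rfl⟩, Nat.mul_div_cancel_left N (show 0 < k by omega), smul_smul]
    congr 1
    push_cast
    ring
  · rw [if_neg hn, smul_zero]
    symm
    apply Finset.sum_eq_zero
    intro i hi
    rw [Finset.mem_range] at hi
    by_cases hik : i ≠ 0 ∧ k ∣ i
    · have : ¬ k ∣ (n - i) := by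
        intro hd
        exact hn (by
          have h1 : n = i + (n - i) := by omega
          rw [h1]
          exact Nat.dvd_add hik.2 hd)
      rw [if_neg this, hmul_zero_right]
    · have : gexp z k i = 0 := by unfold gexp; rw [if_neg hik]
      rw [this, smul_zero, hmul_zero_left]

lemma main_eq (z : M) (k : ℕ) (hk : 1 ≤ k) :
    ∀ d, (if k ∣ d then sprod z k (d / k) else 0) = expPS (gexp z k) d := by
  intro n
  induction n using Nat.strong_induction_on with
  | _ n ih =>
    rcases Nat.eq_zero_or_pos n with rfl | hn
    · rw [if_pos (dvd_zero k), Nat.zero_div]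
      show sprod z k 0 = _
      simp [expPS, psPow, sprod]
    · have hrecA := aseq_rec z k hk n
      have hrecE := expPS_deriv (gexp z k) (gexp_zero z k) (gexp_comm z k) n
      have hsum : (∑ i ∈ Finset.range (n + 1),
            hmul ((i : ℚ) • gexp z k i)
              ((if k ∣ (n - i) then sprod z k ((n - i) / k) else 0) : H M))
          = ∑ i ∈ Finset.range (n + 1),
              hmul ((i : ℚ) • gexp z k i) (expPS (gexp z k) (n - i)) := by
        refine Finset.sum_congr rfl fun i _ => ?_
        rcases Nat.eq_zero_or_pos i with rfl | hipos
        · rw [show ((0 : ℕ) : ℚ) • gexp z k 0 = 0 by simp, hmul_zero_left, hmul_zero_left]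
        · rw [ih (n - i) (by omega)]
      have hfin : (n : ℚ) • (if k ∣ n then sprod z k (n / k) else 0)
          = (n : ℚ) • expPS (gexp z k) n := by
        rw [hrecA, hsum, ← hrecE]
      exact smul_right_injective (H M) (show (n : ℚ) ≠ 0 by exact_mod_cast hn.ne') hfin

end Final

/-- Theorem 2.5: `S^T_{z,k}(x) = S^R_{z,k}(x)` in `𝔥_{M,∗}⟦x⟧`; equivalently
`Σ_{n≥0} s_{z^n,k}⋯s_{z,k} x^{nk} = exp_∗(Σ_{n≥1} (s_{z^n,nk}/n) x^{nk})`. -/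
theorem ST_eq_SR (M : Type*) [MonoidWithZero M] (z : M) (k : ℕ) (hk : 1 ≤ k) :
    (∀ d, STcoef z k d = SRcoef z k d) ∧
    (∀ d, (if k ∣ d then sprod z k (d / k) else 0) = expPS (gexp z k) d) := by
  constructor
  · intro d
    unfold STcoef SRcoef
    by_cases h1 : k ∣ (d + 1)
    · obtain ⟨q, hq⟩ := h1
      have hq1 : 1 ≤ q := by
        rcases Nat.eq_zero_or_pos q with rfl | h
        · simp at hq
        · exact h
      have hkq : k ≤ k * q := by
        calc k = k * 1 := (Nat.mul_one k).symm
        _ ≤ k * q := Nat.mul_le_mul_left k hq1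
      have h2 : k - 1 ≤ d := by omega
      rw [if_pos ⟨q, hq⟩, if_pos h2, ← main_eq z k hk (d - (k - 1))]
      have e : d - (k - 1) = k * (q - 1) := by
        have h3 : k * (q - 1) + k = k * q := by
          rw [← Nat.mul_succ]
          congr 1
          omega
        omega
      rw [e, if_pos ⟨q - 1, rfl⟩, Nat.mul_div_cancel_left _ (show 0 < k by omega)]
      congr 1
      rw [hq, Nat.mul_div_cancel_left _ (show 0 < k by omega)]
    · rw [if_neg h1]
      by_cases h2 : k - 1 ≤ d
      · rw [if_pos h2, ← main_eq z k hk (d - (k - 1)), if_neg ?hd]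
        case hd =>
          rintro ⟨q, hq⟩
          apply h1
          refine ⟨q + 1, ?_⟩
          have h3 : k * (q + 1) = k * q + k := Nat.mul_succ k q
          omega
      · rw [if_neg h2]
  · exact main_eq z k hk
end

section
/- Let z ∈ M. In the power series ring 𝔥_{M,∗}⟦x,y⟧, for every N ≥ 0 and 0 ≤ i ≤ 2N+1, the coefficient of x^i y^{2N+1−i} in A_z(x,y) := S_z(x+y) − S_z(x) ∗ C_z(y) − C_z(x) ∗ S_z(y) equals g_{z,⌊i/2⌋, N−⌊i/2⌋} / (i!(2N+1−i)!) when using the convention that for odd i one takes g_{z,(i−1)/2, N−(i−1)/2} and for even i one takes g_{z,i/2, N−i/2}; moreover all coefficients of A_z in total even degree vanish. -/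
open scoped BigOperators

variable {M : Type*} [MonoidWithZero M]

theorem hmul_zero' (f : H M) : hmul f 0 = 0 := by simp [hmul]
theorem zero_hmul' (g : H M) : hmul 0 g = 0 := by simp [hmul]

set_option maxRecDepth 8000 in
theorem smul_hmul (c : ℚ) (f g : H M) : hmul (c • f) g = c • hmul f g := by
  unfold hmul
  rw [MonoidAlgebra.coeff_smul]
  rw [Finsupp.sum_smul_index (fun i => by simp)]
  rw [Finsupp.smul_sum]
  refine Finsupp.sum_congr fun w _ => ?_
  rw [Finsupp.smul_sum]
  refine Finsupp.sum_congr fun w' _ => ?_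
  rw [mul_assoc, mul_smul]

set_option maxRecDepth 8000 in
theorem hmul_smul (c : ℚ) (f g : H M) : hmul f (c • g) = c • hmul f g := by
  unfold hmul
  rw [Finsupp.smul_sum]
  refine Finsupp.sum_congr fun w _ => ?_
  rw [MonoidAlgebra.coeff_smul, Finsupp.sum_smul_index (fun i => by simp), Finsupp.smul_sum]
  refine Finsupp.sum_congr fun w' _ => ?_
  rw [show f.coeff w * (c * g.coeff w') = c * (f.coeff w * g.coeff w') by ring, mul_smul]


theorem Scoef_odd2 (z : M) (n : ℕ) : Scoef z (2 * n + 1) = sprod z 2 n := by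
  unfold Scoef
  rw [if_pos (by omega)]
  congr 1
  omega

theorem Scoef_even2 (z : M) (n : ℕ) : Scoef z (2 * n) = 0 := by
  unfold Scoef
  rw [if_neg (by omega)]

theorem Ccoef_even2 (z : M) (n : ℕ) :
    Ccoef z (2 * n) = ((2 * n + 1 : ℕ) : ℚ) • sprod z 2 n := by
  unfold Ccoef
  rw [Scoef_odd2]
  norm_num

theorem Ccoef_odd2 (z : M) (n : ℕ) : Ccoef z (2 * n + 1) = 0 := by
  unfold Ccoef
  rw [show 2 * n + 1 + 1 = 2 * (n + 1) by ring, Scoef_even2, smul_zero]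

/-- The coefficients of `A_z(x,y) = S_z(x+y) − S_z(x) ∗ C_z(y) − C_z(x) ∗ S_z(y)`:
at `x^i y^{2N+1−i}` it equals `g_{z,⌊i/2⌋,N−⌊i/2⌋}/(i!(2N+1−i)!)`, and all total-even
degree coefficients vanish. -/
theorem Acoef_formula (M : Type*) [MonoidWithZero M] (z : M) :
    (∀ N i : ℕ, i ≤ 2 * N + 1 →
      Acoef z i (2 * N + 1 - i) =
        ((Nat.factorial i * Nat.factorial (2 * N + 1 - i) : ℚ))⁻¹ •
          gz z (i / 2) (N - i / 2)) ∧
    (∀ i j : ℕ, (i + j) % 2 = 0 → Acoef z i j = 0) := by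
  constructor
  · intro N i hi
    unfold Acoef gz wz
    rcases Nat.even_or_odd i with he | ho
    · have hie : i % 2 = 0 := Nat.even_iff.mp he
      obtain ⟨m, rfl⟩ : ∃ m, i = 2 * m := ⟨i / 2, by omega⟩
      obtain ⟨n, rfl⟩ : ∃ n, N = m + n := ⟨N - m, by omega⟩
      have h1 : 2 * (m + n) + 1 - 2 * m = 2 * n + 1 := by omega
      have h2 : (2 * m) / 2 = m := by omega
      have h3 : m + n - m = n := by omega
      have h4 : 2 * m + (2 * n + 1) = 2 * (m + n) + 1 := by omega
      rw [h1, h2, h3, h4, Scoef_odd2, Scoef_even2, Scoef_odd2, Ccoef_even2, zero_hmul']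
      simp only [smul_hmul, hmul_smul, smul_smul, smul_sub, sub_zero]
      have key := Nat.choose_mul_factorial_mul_factorial (n := 2 * (m + n) + 1)
        (k := 2 * m) (by omega)
      rw [h1] at key
      match_scalars
      · field_simp
        push_cast [← key]
        ring
      · have hsucc : ((Nat.factorial (2 * m + 1) : ℚ)) =
            ((2 * m + 1 : ℕ) : ℚ) * (Nat.factorial (2 * m) : ℚ) := by
          rw [Nat.factorial_succ]; push_cast; ring
        rw [hsucc]
        have hm0 : ((Nat.factorial (2 * m) : ℚ)) ≠ 0 := by positivity
        have hn0 : ((Nat.factorial (2 * n + 1) : ℚ)) ≠ 0 := by positivity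
        field_simp
        push_cast
        ring
    · have hio : i % 2 = 1 := Nat.odd_iff.mp ho
      obtain ⟨m, rfl⟩ : ∃ m, i = 2 * m + 1 := ⟨i / 2, by omega⟩
      obtain ⟨n, rfl⟩ : ∃ n, N = m + n := ⟨N - m, by omega⟩
      have h1 : 2 * (m + n) + 1 - (2 * m + 1) = 2 * n := by omega
      have h2 : (2 * m + 1) / 2 = m := by omega
      have h3 : m + n - m = n := by omega
      have h4 : 2 * m + 1 + 2 * n = 2 * (m + n) + 1 := by omega
      rw [h1, h2, h3, h4, Scoef_odd2, Scoef_odd2, Scoef_even2, Ccoef_even2,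
        Ccoef_odd2, hmul_zero']
      simp only [smul_hmul, hmul_smul, smul_smul, smul_sub, sub_zero]
      have key := Nat.choose_mul_factorial_mul_factorial (n := 2 * (m + n) + 1)
        (k := 2 * m + 1) (by omega)
      rw [h1] at key
      match_scalars
      · field_simp
        push_cast [← key]
        ring
      · have hsucc : ((Nat.factorial (2 * n + 1) : ℚ)) =
            ((2 * n + 1 : ℕ) : ℚ) * (Nat.factorial (2 * n) : ℚ) := by
          rw [Nat.factorial_succ]; push_cast; ring
        rw [hsucc]
        have hm0 : ((Nat.factorial (2 * m + 1) : ℚ)) ≠ 0 := by positivity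
        have hn0 : ((Nat.factorial (2 * n) : ℚ)) ≠ 0 := by positivity
        field_simp
        push_cast
        ring
  · intro i j hij
    unfold Acoef
    rcases Nat.even_or_odd i with he | ho
    · have hie : i % 2 = 0 := Nat.even_iff.mp he
      have hje : j % 2 = 0 := by omega
      obtain ⟨a, rfl⟩ : ∃ a, i = 2 * a := ⟨i / 2, by omega⟩
      obtain ⟨b, rfl⟩ : ∃ b, j = 2 * b := ⟨j / 2, by omega⟩
      rw [show 2 * a + 2 * b = 2 * (a + b) by ring, Scoef_even2, Scoef_even2,
        Scoef_even2, zero_hmul', hmul_zero', smul_zero]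
      simp
    · have hio : i % 2 = 1 := Nat.odd_iff.mp ho
      have hjo : j % 2 = 1 := by omega
      obtain ⟨a, rfl⟩ : ∃ a, i = 2 * a + 1 := ⟨i / 2, by omega⟩
      obtain ⟨b, rfl⟩ : ∃ b, j = 2 * b + 1 := ⟨j / 2, by omega⟩
      rw [show 2 * a + 1 + (2 * b + 1) = 2 * (a + b + 1) by ring, Scoef_even2,
        Ccoef_odd2, Ccoef_odd2, zero_hmul', hmul_zero', smul_zero]
      simp
end
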